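/- For any t > 0 and integer x ≥ 0, √t · e^{-t} · I_x(t) ≤ (1 + x/t)^{-x/2}. -/

import Mathlib

open Real


/-- Modified Bessel function of the first kind of integer order `x ≥ 0`,
defined by its power series. -/
noncomputable def besselI (x : ℕ) (t : ℝ) : ℝ :=
  ∑' n : ℕ, (t / 2) ^ (2 * n + x) / (n.factorial * (n + x).factorial)



-- central binomial numeric bound
lemma cb_sq (n : ℕ) : (Nat.centralBinom n)^2 * (2*n+1) ≤ 16^n := by
  induction n with
  | zero => simp [Nat.centralBinom]
  | succ n ih =>
    have h := Nat.succ_mul_centralBinom_succ n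
    have key : (n+1)^2 * ((Nat.centralBinom (n+1))^2 * (2*(n+1)+1)) ≤ (n+1)^2 * 16^(n+1) := by
      calc (n+1)^2 * ((Nat.centralBinom (n+1))^2 * (2*(n+1)+1))
          = ((n+1) * Nat.centralBinom (n+1))^2 * (2*n+3) := by ring
        _ = (2*(2*n+1)*Nat.centralBinom n)^2 * (2*n+3) := by rw [h]
        _ = (4*(2*n+1)*(2*n+3)) * ((Nat.centralBinom n)^2*(2*n+1)) := by ring
        _ ≤ (4*(2*n+1)*(2*n+3)) * 16^n := Nat.mul_le_mul_left _ ih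
        _ ≤ (16*(n+1)^2) * 16^n := Nat.mul_le_mul_right _ (by nlinarith)
        _ = (n+1)^2 * 16^(n+1) := by ring
    exact Nat.le_of_mul_le_mul_left key (by positivity)

lemma cb_le (n : ℕ) : (Nat.centralBinom n : ℝ) * Real.sqrt (2*n+1) ≤ 4^n := by
  have h0 : (0:ℝ) ≤ 2*(n:ℝ)+1 := by positivity
  have h1 : ((Nat.centralBinom n : ℝ) * Real.sqrt (2*n+1))^2 ≤ ((4:ℝ)^n)^2 := by
    rw [mul_pow, Real.sq_sqrt h0]
    have := cb_sq n
    have hcast : ((Nat.centralBinom n)^2 * (2*n+1) : ℝ) ≤ (16:ℝ)^n := by exact_mod_cast this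
    calc ((Nat.centralBinom n : ℝ))^2 * (2*(n:ℝ)+1) = (((Nat.centralBinom n)^2 * (2*n+1) : ℕ) : ℝ) := by
          push_cast; ring
      _ ≤ (16:ℝ)^n := by exact_mod_cast this
      _ = ((4:ℝ)^n)^2 := by rw [← pow_mul, pow_mul']; norm_num
  have h2 : (0:ℝ) ≤ (Nat.centralBinom n : ℝ) * Real.sqrt (2*n+1) := by positivity
  calc (Nat.centralBinom n : ℝ) * Real.sqrt (2*n+1)
      = Real.sqrt (((Nat.centralBinom n : ℝ) * Real.sqrt (2*n+1))^2) := (Real.sqrt_sq h2).symm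
    _ ≤ Real.sqrt (((4:ℝ)^n)^2) := Real.sqrt_le_sqrt h1
    _ = 4^n := Real.sqrt_sq (by positivity)

lemma exp_tsum (z : ℝ) : Real.exp z = ∑' n : ℕ, z^n / n.factorial := by
  rw [Real.exp_eq_exp_ℝ, NormedSpace.exp_eq_tsum_div]

lemma I0_le {w : ℝ} (hw : 0 < w) :
    (∑' n : ℕ, ((w^n / n.factorial : ℝ))^2) ≤ Real.exp (2*w) / Real.sqrt (2*w) := by
  set z : ℝ := 2*w with hz_def
  have hz : 0 < z := by positivity
  have hsz : 0 < Real.sqrt z := Real.sqrt_pos.mpr hz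
  have hterm : ∀ n : ℕ, ((w^n / n.factorial : ℝ))^2
      ≤ (z^(2*n)/(2*n).factorial + z^(2*n+1)/(2*n+1).factorial) / Real.sqrt z := by
    intro n
    have hfact : ((Nat.centralBinom n : ℝ)) * (n.factorial * n.factorial) = (2*n).factorial := by
      have h := Nat.choose_mul_factorial_mul_factorial (show n ≤ 2*n by omega)
      have h2 : (2*n - n) = n := by omega
      rw [h2] at h
      rw [Nat.centralBinom]
      exact_mod_cast (by rw [← h]; ring :
        (2*n).choose n * (n.factorial * n.factorial) = (2*n).factorial)
    have hss : Real.sqrt ((2*n:ℝ)+1) * Real.sqrt ((2*n:ℝ)+1) = (2*(n:ℝ)+1) :=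
      Real.mul_self_sqrt (by positivity)
    have key : (Nat.centralBinom n : ℝ) * w^(2*n) * (2*(n:ℝ)+1) * Real.sqrt z
        ≤ z^(2*n) * (z + (2*(n:ℝ)+1)) := by
      have hb : (Nat.centralBinom n : ℝ) * w^(2*n) * Real.sqrt (2*n+1) ≤ z^(2*n) := by
        have h4 := mul_le_mul_of_nonneg_right (cb_le n) (pow_nonneg hw.le (2*n))
        calc (Nat.centralBinom n : ℝ) * w^(2*n) * Real.sqrt (2*n+1)
            = (Nat.centralBinom n : ℝ) * Real.sqrt (2*n+1) * w^(2*n) := by ring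
          _ ≤ 4^n * w^(2*n) := h4
          _ = z^(2*n) := by rw [hz_def, mul_pow]; congr 1; rw [pow_mul]; norm_num
      have hAM : Real.sqrt ((2*n:ℝ)+1) * Real.sqrt z ≤ z + (2*(n:ℝ)+1) := by
        rw [← Real.sqrt_mul (by positivity)]
        calc Real.sqrt (((2*n:ℝ)+1) * z) ≤ Real.sqrt ((z + (2*(n:ℝ)+1))^2) := by
              apply Real.sqrt_le_sqrt; nlinarith [sq_nonneg (z - (2*(n:ℝ)+1))]
          _ = z + (2*(n:ℝ)+1) := Real.sqrt_sq (by positivity)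
      have h1 : (Nat.centralBinom n : ℝ) * w^(2*n) * (2*(n:ℝ)+1) * Real.sqrt z
          = ((Nat.centralBinom n : ℝ) * w^(2*n) * Real.sqrt ((2*n:ℝ)+1)) * (Real.sqrt ((2*n:ℝ)+1) * Real.sqrt z) := by
        linear_combination ((Nat.centralBinom n : ℝ) * w^(2*n) * Real.sqrt z) * hss.symm
      rw [h1]
      exact mul_le_mul hb hAM (by positivity) (by positivity)
    have hfpos : (0:ℝ) < ((2*n+1).factorial : ℝ) := by positivity
    have hf1 : ((2*n+1).factorial : ℝ) = (2*(n:ℝ)+1) * ((2*n).factorial : ℝ) := by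
      rw [show 2*n+1 = (2*n)+1 by ring, Nat.factorial_succ]; push_cast; ring
    have e1 : ((w^n / n.factorial : ℝ))^2
        = (Nat.centralBinom n : ℝ) * w^(2*n) * (2*(n:ℝ)+1) / ((2*n+1).factorial : ℝ) := by
      rw [div_pow, hf1, div_eq_div_iff (by positivity) (by positivity), pow_mul']
      linear_combination (-(w^n)^2 * (2*(n:ℝ)+1)) * hfact
    have e2 : (z^(2*n)/(2*n).factorial + z^(2*n+1)/(2*n+1).factorial) / Real.sqrt z
        = z^(2*n) * (z + (2*(n:ℝ)+1)) / (((2*n+1).factorial : ℝ) * Real.sqrt z) := by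
      have hnf : (0:ℝ) < ((2*n).factorial : ℝ) := by positivity
      rw [hf1, pow_succ]
      field_simp
      ring
    rw [e1, e2, div_le_div_iff₀ hfpos (by positivity)]
    calc (Nat.centralBinom n : ℝ) * w^(2*n) * (2*(n:ℝ)+1) * (((2*n+1).factorial : ℝ) * Real.sqrt z)
        = ((Nat.centralBinom n : ℝ) * w^(2*n) * (2*(n:ℝ)+1) * Real.sqrt z) * ((2*n+1).factorial : ℝ) := by ring
      _ ≤ (z^(2*n) * (z + (2*(n:ℝ)+1))) * ((2*n+1).factorial : ℝ) :=
          mul_le_mul_of_nonneg_right key hfpos.le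
      _ = z^(2*n) * (z + (2*(n:ℝ)+1)) * ((2*n+1).factorial : ℝ) := by ring
  -- summability
  have fac_one : ∀ m : ℕ, (1:ℝ) ≤ (m.factorial : ℝ) := fun m => by
    exact_mod_cast m.factorial_pos
  have sumL : Summable (fun n : ℕ => ((w^n / n.factorial : ℝ))^2) := by
    apply Summable.of_nonneg_of_le (fun n => by positivity) _
      (Real.summable_pow_div_factorial (w^2))
    intro n
    have h1 := fac_one n
    have h2 : (0:ℝ) < (n.factorial:ℝ) := by positivity
    have hnum : w^(n*2) = (w^2)^n := by rw [← pow_mul, mul_comm]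
    rw [div_pow, ← pow_mul, hnum]
    exact div_le_div_of_nonneg_left (by positivity) h2 (by nlinarith)
  have sumE : Summable (fun n : ℕ => z^(2*n)/((2*n).factorial : ℝ)) := by
    apply Summable.of_nonneg_of_le (fun n => by positivity) _
      (Real.summable_pow_div_factorial (z^2))
    intro n
    have hnum : z^(2*n) = (z^2)^n := pow_mul z 2 n
    rw [← hnum]
    exact div_le_div_of_nonneg_left (by positivity) (by positivity)
      (by exact_mod_cast Nat.factorial_le (by omega : n ≤ 2*n))
  have sumO : Summable (fun n : ℕ => z^(2*n+1)/((2*n+1).factorial : ℝ)) := by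
    apply Summable.of_nonneg_of_le (fun n => by positivity) _
      ((Real.summable_pow_div_factorial (z^2)).mul_left z)
    intro n
    have e : z^(2*n+1) = z * (z^2)^n := by rw [pow_succ, pow_mul]; exact mul_comm _ _
    calc z^(2*n+1)/((2*n+1).factorial:ℝ) ≤ z^(2*n+1)/(n.factorial:ℝ) :=
        div_le_div_of_nonneg_left (by positivity) (by positivity)
          (by exact_mod_cast Nat.factorial_le (by omega))
      _ = z * ((z^2)^n/(n.factorial:ℝ)) := by rw [e]; ring
  -- sum of the bound
  have sumR : Summable (fun n : ℕ => (z^(2*n)/((2*n).factorial:ℝ) + z^(2*n+1)/((2*n+1).factorial:ℝ)) / Real.sqrt z) :=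
    (sumE.add sumO).div_const _
  calc (∑' n : ℕ, ((w^n / n.factorial : ℝ))^2)
      ≤ ∑' n : ℕ, (z^(2*n)/((2*n).factorial:ℝ) + z^(2*n+1)/((2*n+1).factorial:ℝ)) / Real.sqrt z :=
        Summable.tsum_le_tsum hterm sumL sumR
    _ = (∑' n : ℕ, (z^(2*n)/((2*n).factorial:ℝ) + z^(2*n+1)/((2*n+1).factorial:ℝ))) / Real.sqrt z :=
        tsum_div_const
    _ = Real.exp z / Real.sqrt z := by
        have hSum : HasSum (fun k : ℕ => z^k/(k.factorial:ℝ))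
            ((∑' n : ℕ, z^(2*n)/((2*n).factorial:ℝ)) + ∑' n : ℕ, z^(2*n+1)/((2*n+1).factorial:ℝ)) :=
          HasSum.even_add_odd sumE.hasSum sumO.hasSum
        congr 1
        rw [Summable.tsum_add sumE sumO, exp_tsum z, ← hSum.tsum_eq]
    _ = Real.exp (2*w) / Real.sqrt (2*w) := by rw [← hz_def]

lemma amgm {ε a b : ℝ} (hε : 0 < ε) : a*b ≤ (ε*a^2 + ε⁻¹*b^2)/2 := by
  rw [le_div_iff₀ (by norm_num : (0:ℝ) < 2)]
  have h := sq_nonneg (ε*a - b)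
  have h2 : ε⁻¹ * (ε*a-b)^2 = ε*a^2 + ε⁻¹*b^2 - 2*(a*b) := by
    field_simp
    ring
  nlinarith [mul_nonneg (inv_nonneg.2 hε.le) h]


set_option maxHeartbeats 1000000 in
theorem besselI_uniform_bound (t : ℝ) (ht : 0 < t) (x : ℕ) :
    Real.sqrt t * Real.exp (-t) * besselI x t ≤ (1 + x / t) ^ (-(x : ℝ) / 2) := by
  have htx : 0 < t + x := by positivity
  set v : ℝ := (t + x)/2 with hv_def
  set u : ℝ := t^2/(2*(t+x)) with hu_def
  have hv : 0 < v := by positivity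
  have hu : 0 < u := by positivity
  have huv : u * v = (t/2)^2 := by rw [hu_def, hv_def]; field_simp
  set c : ℝ := (t/(t+x))^x with hc_def
  have hc : 0 < c := by positivity
  set ε : ℝ := Real.exp (v - u) * Real.sqrt (2*u) / Real.sqrt t with hε_def
  have hε : 0 < ε := by positivity
  have fac_pos : ∀ m : ℕ, (0:ℝ) < (m.factorial : ℝ) := fun m => by positivity
  -- termwise identity
  have hid : ∀ n : ℕ, (t/2) ^ (2*n+x) / ((n.factorial : ℝ) * ((n+x).factorial : ℝ))
      = c * ((u^n/(n.factorial:ℝ)) * (v^(n+x)/((n+x).factorial:ℝ))) := by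
    intro n
    have e0 : (t/(t+x)) * v = t/2 := by rw [hv_def]; field_simp
    have e1 : c * ((u^n/(n.factorial:ℝ)) * (v^(n+x)/((n+x).factorial:ℝ)))
        = ((t/(t+x))*v)^x * (u*v)^n / ((n.factorial:ℝ) * ((n+x).factorial:ℝ)) := by
      rw [hc_def, mul_pow, mul_pow, pow_add]
      ring
    rw [e1, e0, huv, ← pow_mul, ← pow_add]
    rw [add_comm x (2*n)]
  -- summabilities
  have sum_f : Summable (fun n : ℕ => (t/2) ^ (2*n+x) / ((n.factorial : ℝ) * ((n+x).factorial : ℝ))) := by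
    apply Summable.of_nonneg_of_le (fun n => by positivity) _
      ((Real.summable_pow_div_factorial ((t/2)^2)).mul_left ((t/2)^x))
    intro n
    have e : (t/2)^(2*n+x) = (t/2)^x * ((t/2)^2)^n := by
      rw [← pow_mul, ← pow_add, add_comm]
    rw [e, mul_div_assoc]
    apply mul_le_mul_of_nonneg_left _ (by positivity)
    have h1 : (1:ℝ) ≤ ((n+x).factorial : ℝ) := by exact_mod_cast (n+x).factorial_pos
    rw [div_le_div_iff₀ (by positivity) (by positivity)]
    calc ((t/2)^2)^n * (n.factorial:ℝ) = (((t/2)^2)^n * (n.factorial:ℝ)) * 1 := by ring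
      _ ≤ (((t/2)^2)^n * (n.factorial:ℝ)) * ((n+x).factorial:ℝ) :=
          mul_le_mul_of_nonneg_left h1 (by positivity)
      _ = ((t/2)^2)^n * ((n.factorial:ℝ) * ((n+x).factorial:ℝ)) := by ring
  have sum_g : Summable (fun n : ℕ => (u^n/(n.factorial:ℝ)) * (v^(n+x)/((n+x).factorial:ℝ))) := by
    have : (fun n : ℕ => (u^n/(n.factorial:ℝ)) * (v^(n+x)/((n+x).factorial:ℝ)))
        = fun n => c⁻¹ * ((t/2) ^ (2*n+x) / ((n.factorial : ℝ) * ((n+x).factorial : ℝ))) := by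
      funext n; rw [hid n]; field_simp
    rw [this]
    exact sum_f.mul_left _
  have sq_sum : ∀ y : ℝ, 0 < y → Summable (fun n : ℕ => ((y^n/(n.factorial:ℝ)))^2) := by
    intro y hy
    apply Summable.of_nonneg_of_le (fun n => by positivity) _
      (Real.summable_pow_div_factorial (y^2))
    intro n
    have h1 : (1:ℝ) ≤ (n.factorial : ℝ) := by exact_mod_cast n.factorial_pos
    have hnum : y^(n*2) = (y^2)^n := by rw [← pow_mul, mul_comm]
    rw [div_pow, ← pow_mul, hnum]
    exact div_le_div_of_nonneg_left (by positivity) (by positivity) (by nlinarith)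
  have sum_A := sq_sum u hu
  have sum_Bf := sq_sum v hv
  have sum_B : Summable (fun n : ℕ => ((v^(n+x)/((n+x).factorial:ℝ)))^2) :=
    (summable_nat_add_iff x).mpr sum_Bf
  -- bound on the cross sum S
  have hS : (∑' n : ℕ, (u^n/(n.factorial:ℝ)) * (v^(n+x)/((n+x).factorial:ℝ)))
      ≤ Real.exp (u+v) / Real.sqrt t := by
    have hBle : (∑' n : ℕ, ((v^(n+x)/((n+x).factorial:ℝ)))^2)
        ≤ ∑' n : ℕ, ((v^n/(n.factorial:ℝ)))^2 := by
      apply Summable.tsum_le_tsum_of_inj (fun n => n + x) (add_left_injective x)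
        (fun m _ => by positivity) (fun n => le_refl _) sum_B sum_Bf
    have hA := I0_le hu
    have hB := le_trans hBle (I0_le hv)
    have heq1 : ε * (Real.exp (2*u)/Real.sqrt (2*u)) = Real.exp (u+v)/Real.sqrt t := by
      have e1 : Real.exp (v-u) * Real.exp (2*u) = Real.exp (u+v) := by
        rw [← Real.exp_add]; ring_nf
      have h2u : Real.sqrt (2*u) ≠ 0 := by positivity
      have hst : Real.sqrt t ≠ 0 := by positivity
      calc ε * (Real.exp (2*u)/Real.sqrt (2*u))
          = (Real.exp (v-u) * Real.exp (2*u)) * (Real.sqrt (2*u) / Real.sqrt (2*u)) / Real.sqrt t := by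
            rw [hε_def]; ring
        _ = Real.exp (u+v)/Real.sqrt t := by rw [e1, div_self h2u, mul_one]
    have heq2' : ε * (Real.exp (u+v)/Real.sqrt t) = Real.exp (2*v)/Real.sqrt (2*v) := by
      have e1 : Real.exp (v-u) * Real.exp (u+v) = Real.exp (2*v) := by
        rw [← Real.exp_add]; ring_nf
      have e2 : Real.sqrt t * Real.sqrt t = t := Real.mul_self_sqrt ht.le
      have hprod : Real.sqrt (2*u) * Real.sqrt (2*v) = t := by
        rw [← Real.sqrt_mul (by positivity)]
        have e3 : (2*u)*(2*v) = t^2 := by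
          have : u * v = (t/2)^2 := huv
          nlinarith
        rw [e3, Real.sqrt_sq ht.le]
      have h2v : Real.sqrt (2*v) ≠ 0 := by positivity
      have h2u : Real.sqrt (2*u) ≠ 0 := by positivity
      have hst : Real.sqrt t ≠ 0 := by positivity
      calc ε * (Real.exp (u+v)/Real.sqrt t)
          = (Real.exp (v-u) * Real.exp (u+v)) * Real.sqrt (2*u) / (Real.sqrt t * Real.sqrt t) := by
            rw [hε_def]; ring
        _ = Real.exp (2*v) * Real.sqrt (2*u) / t := by rw [e1, e2]
        _ = (Real.sqrt (2*u) * Real.exp (2*v)) / (Real.sqrt (2*u) * Real.sqrt (2*v)) := by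
            rw [hprod]; ring
        _ = Real.exp (2*v)/Real.sqrt (2*v) := mul_div_mul_left _ _ h2u
    have heq2 : ε⁻¹ * (Real.exp (2*v)/Real.sqrt (2*v)) = Real.exp (u+v)/Real.sqrt t := by
      rw [← heq2', ← mul_assoc, inv_mul_cancel₀ (ne_of_gt hε), one_mul]
    have step1 : (∑' n : ℕ, (u^n/(n.factorial:ℝ)) * (v^(n+x)/((n+x).factorial:ℝ)))
        ≤ ∑' n : ℕ, (ε*((u^n/(n.factorial:ℝ)))^2 + ε⁻¹*((v^(n+x)/((n+x).factorial:ℝ)))^2)/2 := by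
      apply Summable.tsum_le_tsum (fun n => amgm hε) sum_g
      exact ((sum_A.mul_left ε).add (sum_B.mul_left ε⁻¹)).div_const 2
    have step2 : (∑' n : ℕ, (ε*((u^n/(n.factorial:ℝ)))^2 + ε⁻¹*((v^(n+x)/((n+x).factorial:ℝ)))^2)/2)
        = (ε * (∑' n : ℕ, ((u^n/(n.factorial:ℝ)))^2) + ε⁻¹ * (∑' n : ℕ, ((v^(n+x)/((n+x).factorial:ℝ)))^2))/2 := by
      rw [← tsum_mul_left, ← tsum_mul_left, ← Summable.tsum_add (sum_A.mul_left ε) (sum_B.mul_left ε⁻¹), tsum_div_const]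
    calc (∑' n : ℕ, (u^n/(n.factorial:ℝ)) * (v^(n+x)/((n+x).factorial:ℝ)))
        ≤ (ε * (∑' n : ℕ, ((u^n/(n.factorial:ℝ)))^2) + ε⁻¹ * (∑' n : ℕ, ((v^(n+x)/((n+x).factorial:ℝ)))^2))/2 := by
          rw [← step2]; exact step1
      _ ≤ (ε * (Real.exp (2*u)/Real.sqrt (2*u)) + ε⁻¹ * (Real.exp (2*v)/Real.sqrt (2*v)))/2 := by
          apply div_le_div_of_nonneg_right _ (by norm_num)
          exact add_le_add (mul_le_mul_of_nonneg_left hA hε.le)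
            (mul_le_mul_of_nonneg_left hB (inv_nonneg.2 hε.le))
      _ = Real.exp (u+v)/Real.sqrt t := by rw [heq1, heq2]; ring
  -- bessel bound
  have hbessel : besselI x t ≤ c * (Real.exp (u+v)/Real.sqrt t) := by
    rw [besselI]
    calc (∑' n:ℕ, (t/2)^(2*n+x)/((n.factorial:ℝ)*((n+x).factorial:ℝ)))
        = ∑' n:ℕ, c * ((u^n/(n.factorial:ℝ)) * (v^(n+x)/((n+x).factorial:ℝ))) := tsum_congr hid
      _ = c * ∑' n:ℕ, ((u^n/(n.factorial:ℝ)) * (v^(n+x)/((n+x).factorial:ℝ))) := tsum_mul_left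
      _ ≤ c * (Real.exp (u+v)/Real.sqrt t) := mul_le_mul_of_nonneg_left hS hc.le
  have hst : Real.sqrt t ≠ 0 := by positivity
  have hmul : Real.sqrt t * Real.exp (-t) * (c * (Real.exp (u+v)/Real.sqrt t))
      = c * Real.exp (u+v-t) := by
    have e : Real.exp (u+v) * Real.exp (-t) = Real.exp (u+v-t) := by
      rw [← Real.exp_add]; ring_nf
    calc Real.sqrt t * Real.exp (-t) * (c * (Real.exp (u+v)/Real.sqrt t))
        = c * (Real.exp (u+v) * Real.exp (-t)) * (Real.sqrt t/Real.sqrt t) := by ring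
      _ = c * Real.exp (u+v-t) := by rw [div_self hst, e, mul_one]
  -- final transcendental inequality
  have hq : (0:ℝ) < 1 + (x:ℝ)/t := by positivity
  have hx1 : (1:ℝ) + (x:ℝ)/t = (t+(x:ℝ))/t := by field_simp
  have e3 : u + v - t = (x:ℝ)^2/(2*(t+(x:ℝ))) := by rw [hu_def, hv_def]; field_simp; ring
  have hL : (x:ℝ)/(t+(x:ℝ)) ≤ Real.log (1 + (x:ℝ)/t) := by
    have h1 := Real.log_le_sub_one_of_pos (show (0:ℝ) < (1+(x:ℝ)/t)⁻¹ by positivity)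
    rw [Real.log_inv] at h1
    have h2 : (1+(x:ℝ)/t)⁻¹ = t/(t+(x:ℝ)) := by rw [hx1, inv_div]
    rw [h2] at h1
    have h3 : t/(t+(x:ℝ)) - 1 = -((x:ℝ)/(t+(x:ℝ))) := by field_simp; ring
    rw [h3] at h1
    linarith
  have e4 : c = Real.exp (Real.log (1 + (x:ℝ)/t) * (-(x:ℝ))) := by
    rw [hc_def, show t/(t+(x:ℝ)) = (1+(x:ℝ)/t)⁻¹ from by rw [hx1, inv_div], inv_pow,
      ← Real.rpow_natCast (1+(x:ℝ)/t) x, ← Real.rpow_neg hq.le, Real.rpow_def_of_pos hq]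
  have e5 : (1 + (x:ℝ)/t)^(-(x:ℝ)/2) = Real.exp (Real.log (1 + (x:ℝ)/t) * (-(x:ℝ)/2)) :=
    Real.rpow_def_of_pos hq _
  have hfinal : c * Real.exp (u+v-t) ≤ (1 + (x:ℝ)/t)^(-(x:ℝ)/2) := by
    rw [e4, e3, ← Real.exp_add, e5, Real.exp_le_exp]
    have hmul2 := mul_le_mul_of_nonneg_left hL (show (0:ℝ) ≤ (x:ℝ)/2 by positivity)
    have he : ((x:ℝ)/2)*((x:ℝ)/(t+(x:ℝ))) = (x:ℝ)^2/(2*(t+(x:ℝ))) := by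
      field_simp
    nlinarith [hmul2, he]
  calc Real.sqrt t * Real.exp (-t) * besselI x t
      ≤ Real.sqrt t * Real.exp (-t) * (c * (Real.exp (u+v)/Real.sqrt t)) :=
        mul_le_mul_of_nonneg_left hbessel (by positivity)
    _ = c * Real.exp (u+v-t) := hmul
    _ ≤ (1 + (x:ℝ)/t)^(-(x:ℝ)/2) := hfinal
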